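/- Let d ≥ 1, N ≥ 1, and let n₁,…,n_N ∈ ℤ^d \ {0} be an N-sparse sequence, i.e. |n_{j+1}|₂ / |n_j|₂ ≥ 3^N for 1 ≤ j ≤ N−1. Then for every 1 ≤ l ≤ N and every ξ ∈ {−1,0,1}^N with ξ_k = 0 for all k ≥ l, the vector M(ξ) = ∑_{j=1}^N ξ_j n_j satisfies |M(ξ)^{(i)}| ≤ (3/(2·3^N)) · |n_l|₂ for every coordinate i ∈ {1,…,d}. In particular, if additionally 3^N > (3/2)√d and every n_j satisfies |n_j^{(1)}| = max_k |n_j^{(k)}|, then M(ξ)^{(1)} ≠ 0 for every nonzero ξ ∈ {−1,0,1}^N. -/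
import Mathlib


noncomputable section

open MeasureTheory Finset

/-- The open-closed unit cube `(0,1]^d` in `ℝ^d`, a fundamental domain for `𝕋^d = (ℝ/ℤ)^d`. -/
def cube (d : ℕ) : Set (Fin d → ℝ) := Set.univ.pi fun _ => Set.Ioc (0:ℝ) 1

/-- The character `e^{2πi⟨n,t⟩}` on the torus. -/
def charF (d : ℕ) (n : Fin d → ℤ) (t : Fin d → ℝ) : ℂ :=
  Complex.exp (2 * (Real.pi : ℂ) * Complex.I * ((∑ i, (n i : ℝ) * t i : ℝ) : ℂ))

/-- The trigonometric polynomial with Fourier coefficients `c` (assumed finitely supported). -/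
def trigEval {d : ℕ} (c : (Fin d → ℤ) → ℂ) (t : Fin d → ℝ) : ℂ :=
  ∑ᶠ n, c n * charF d n t

/-- The `L¹(𝕋^d)` norm of a function, computed on the fundamental domain. -/
def L1Norm (d : ℕ) (f : (Fin d → ℝ) → ℂ) : ℝ := ∫ t in cube d, ‖f t‖

/-- The `L^q(𝕋^d)` norm of a function, computed on the fundamental domain. -/
def LqNorm (d : ℕ) (q : ℝ) (f : (Fin d → ℝ) → ℂ) : ℝ :=
  (∫ t in cube d, ‖f t‖ ^ q) ^ (1/q)

/-- Fourier coefficients of the partial derivative `∂f/∂x_j`: multiplication by `2πi n_j`. -/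
def derivCoeff {d : ℕ} (j : Fin d) (c : (Fin d → ℤ) → ℂ) : (Fin d → ℤ) → ℂ :=
  fun n => (2 * (Real.pi : ℂ) * Complex.I * (n j : ℂ)) * c n

/-- The Sobolev `W^{1,1}(𝕋^d)` norm of the trigonometric polynomial with coefficients `c`:
`‖f‖₁ + ∑_j ‖∂f/∂x_j‖₁`. -/
def sobNorm (d : ℕ) (c : (Fin d → ℤ) → ℂ) : ℝ :=
  L1Norm d (trigEval c) + ∑ j : Fin d, L1Norm d (trigEval (derivCoeff j c))

/-- `lam` is a `(W^{1,1}, L^q)`-multiplier on `𝕋^d` with norm at most `C`: for every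
trigonometric polynomial `f` (given by its finitely supported coefficients `c`), the
trigonometric polynomial `Tf` with coefficients `n ↦ lam n * c n` satisfies
`‖Tf‖_{L^q} ≤ C ‖f‖_{1,1}`. -/
def IsMultiplier (d : ℕ) (q C : ℝ) (lam : (Fin d → ℤ) → ℂ) : Prop :=
  ∀ c : (Fin d → ℤ) → ℂ, (Function.support c).Finite →
    LqNorm d q (trigEval fun n => lam n * c n) ≤ C * sobNorm d c

/-- The Euclidean norm `|n|₂` of `n ∈ ℤ^d`. -/
def eucNorm (d : ℕ) (n : Fin d → ℤ) : ℝ := Real.sqrt (∑ i, ((n i : ℝ))^2)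

/-- The `k`-th triadic ring `R_k = {n ∈ ℤ^d : 3^k ≤ max_i |n_i| < 3^{k+1}}`. -/
def triadicRing (d k : ℕ) : Set (Fin d → ℤ) :=
  {n | 3^k ≤ Finset.univ.sup (fun i => (n i).natAbs) ∧
       Finset.univ.sup (fun i => (n i).natAbs) < 3^(k+1)}


/-- `M(ξ) = ∑_j ξ_j n_j ∈ ℤ^d` for a sign pattern `ξ ∈ {-1,0,1}^N`. -/
def Mvec {d N : ℕ} (n : Fin N → Fin d → ℤ) (ξ : Fin N → SignType) : Fin d → ℤ :=
  fun i => ∑ j, (ξ j : ℤ) * n j i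

/-- `L(ξ) = ∑_j |ξ_j|`, the number of nonzero coordinates of `ξ ∈ {-1,0,1}^N`. -/
def Lnum {N : ℕ} (ξ : Fin N → SignType) : ℕ := ∑ j, ((ξ j : ℤ)).natAbs

/-- The sequence `n₁, …, n_N` is `N`-sparse: `|n_{j+1}|₂ / |n_j|₂ ≥ 3^N`. -/
def Sparse (d N : ℕ) (n : Fin N → Fin d → ℤ) : Prop :=
  ∀ (j : ℕ) (h : j + 1 < N),
    (3:ℝ)^N * eucNorm d (n ⟨j, by omega⟩) ≤ eucNorm d (n ⟨j + 1, h⟩)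

lemma coord_le_eucNorm' (d : ℕ) (v : Fin d → ℤ) (i : Fin d) :
    |((v i : ℤ) : ℝ)| ≤ eucNorm d v := by
  rw [eucNorm, ← Real.sqrt_sq_eq_abs]
  exact Real.sqrt_le_sqrt (Finset.single_le_sum (f := fun j => ((v j : ℤ):ℝ)^2)
    (fun j _ => sq_nonneg _) (Finset.mem_univ i))

lemma eucNorm_pos' (d : ℕ) (v : Fin d → ℤ) (h : v ≠ 0) : 0 < eucNorm d v := by
  obtain ⟨i, hi⟩ : ∃ i, v i ≠ 0 := by
    by_contra h'; push_neg at h'; exact h (funext h')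
  apply Real.sqrt_pos.mpr
  refine Finset.sum_pos' (fun j _ => sq_nonneg _) ⟨i, Finset.mem_univ i, ?_⟩
  have : ((v i : ℤ) : ℝ) ≠ 0 := Int.cast_ne_zero.mpr hi
  positivity

lemma chainAux (d N : ℕ) (n : Fin N → Fin d → ℤ) (hsp : Sparse d N n) :
    ∀ (m j : ℕ) (h : j + m < N),
      ((3:ℝ)^N)^m * eucNorm d (n ⟨j, by omega⟩) ≤ eucNorm d (n ⟨j + m, h⟩) := by
  intro m
  induction m with
  | zero => intro j h; simp
  | succ m ih =>
    intro j h
    have h1 : j + m < N := by omega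
    have h2 : (j + m) + 1 < N := by omega
    have hstep := hsp (j + m) h2
    have ihm := ih j h1
    have h3 : (0:ℝ) ≤ (3:ℝ)^N := by positivity
    calc ((3:ℝ)^N)^(m+1) * eucNorm d (n ⟨j, by omega⟩)
        = (3:ℝ)^N * (((3:ℝ)^N)^m * eucNorm d (n ⟨j, by omega⟩)) := by ring
      _ ≤ (3:ℝ)^N * eucNorm d (n ⟨j+m, h1⟩) := by
          exact mul_le_mul_of_nonneg_left ihm h3
      _ ≤ eucNorm d (n ⟨j+m+1, h2⟩) := hstep
      _ = eucNorm d (n ⟨j+(m+1), h⟩) := by norm_num [Nat.add_assoc]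

lemma geomAux (t : ℝ) (ht0 : 0 ≤ t) (ht : t ≤ 1/3) (L : ℕ) :
    ∑ m ∈ Finset.range L, t^(m+1) ≤ 3/2 * t := by
  induction L with
  | zero => simp only [Finset.range_zero, Finset.sum_empty]; positivity
  | succ L ih =>
    rw [Finset.sum_range_succ'] 
    have : ∑ m ∈ Finset.range L, t^(m+1+1) = t * ∑ m ∈ Finset.range L, t^(m+1) := by
      rw [Finset.mul_sum]; apply Finset.sum_congr rfl; intro m _; ring
    rw [this]
    have h1 : t * ∑ m ∈ Finset.range L, t^(m+1) ≤ t * (3/2 * t) :=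
      mul_le_mul_of_nonneg_left ih ht0
    have h2 : t * (3/2 * t) ≤ 1/2 * t := by nlinarith
    have h3 : t^(0+1) = t := by ring
    rw [h3]
    linarith

lemma partA (d N : ℕ) (hN : 1 ≤ N) (n : Fin N → Fin d → ℤ) (hsp : Sparse d N n)
    (l : Fin N) (ξ : Fin N → SignType) (hξ : ∀ k : Fin N, l ≤ k → ξ k = 0) (i : Fin d) :
    |((Mvec n ξ i : ℤ) : ℝ)| ≤ 3 / (2 * 3^N) * eucNorm d (n l) := by
  set E := eucNorm d (n l) with hE
  have hEnn : 0 ≤ E := Real.sqrt_nonneg _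
  set t : ℝ := ((3:ℝ)^N)⁻¹ with hT
  have h3N : (3:ℝ) ≤ (3:ℝ)^N := by
    calc (3:ℝ) = 3^1 := (pow_one 3).symm
    _ ≤ 3^N := by apply pow_le_pow_right₀ (by norm_num) hN
  have ht0 : 0 ≤ t := by positivity
  have ht3 : t ≤ 1/3 := by
    rw [hT]
    rw [inv_le_comm₀ (by linarith) (by norm_num)]
    simpa using h3N
  -- termwise bound
  set B : ℕ → ℝ := fun m => if m < (l:ℕ) then t^((l:ℕ) - m) * E else 0 with hB
  have key : ∀ j : Fin N, |((ξ j : ℤ):ℝ) * ((n j i : ℤ):ℝ)| ≤ B (j:ℕ) := by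
    intro j
    by_cases hj : (j:ℕ) < (l:ℕ)
    · have hm : (j:ℕ) + ((l:ℕ) - (j:ℕ)) < N := by omega
      have hch := chainAux d N n hsp ((l:ℕ) - (j:ℕ)) (j:ℕ) hm
      have hl1 : (⟨(j:ℕ) + ((l:ℕ) - (j:ℕ)), hm⟩ : Fin N) = l := by
        rw [Fin.ext_iff]
        show (j:ℕ) + ((l:ℕ) - (j:ℕ)) = (l:ℕ)
        omega
      have hj1 : (⟨(j:ℕ), by omega⟩ : Fin N) = j := Fin.eta j _
      rw [hl1, hj1] at hch
      have hp : (0:ℝ) < ((3:ℝ)^N)^((l:ℕ) - (j:ℕ)) := by positivity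
      have hnj : eucNorm d (n j) ≤ t^((l:ℕ) - (j:ℕ)) * E := by
        rw [hT, inv_pow, inv_mul_eq_div, le_div_iff₀ hp, mul_comm]
        exact hch
      have hξ1 : |((ξ j : ℤ):ℝ)| ≤ 1 := by
        rcases (ξ j) with _|_|_ <;> simp
      rw [abs_mul]
      have := coord_le_eucNorm' d (n j) i
      have hnn : (0:ℝ) ≤ |((n j i : ℤ):ℝ)| := abs_nonneg _
      have : |((ξ j : ℤ):ℝ)| * |((n j i : ℤ):ℝ)| ≤ 1 * (t^((l:ℕ) - (j:ℕ)) * E) := by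
        apply mul_le_mul hξ1 (le_trans (coord_le_eucNorm' d (n j) i) hnj) hnn (by norm_num)
      simpa [hB, hj] using this
    · have : ξ j = 0 := hξ j (by rw [Fin.le_def]; omega)
      simp [hB, hj, this]
  -- sum it up
  have hcast : ((Mvec n ξ i : ℤ):ℝ) = ∑ j : Fin N, ((ξ j : ℤ):ℝ) * ((n j i : ℤ):ℝ) := by
    rw [Mvec]; push_cast; rfl
  have habs : |((Mvec n ξ i : ℤ):ℝ)| ≤ ∑ j : Fin N, B (j:ℕ) := by
    rw [hcast]
    exact le_trans (Finset.abs_sum_le_sum_abs _ _) (Finset.sum_le_sum fun j _ => key j)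
  have hsum1 : ∑ j : Fin N, B (j:ℕ) = ∑ m ∈ Finset.range N, B m :=
    Fin.sum_univ_eq_sum_range B N
  have hsub : Finset.range (l:ℕ) ⊆ Finset.range N := by
    apply Finset.range_subset_range.mpr; omega
  have hsum2 : ∑ m ∈ Finset.range N, B m = ∑ m ∈ Finset.range (l:ℕ), B m := by
    symm
    apply Finset.sum_subset hsub
    intro x _ hx
    simp only [Finset.mem_range, not_lt] at hx
    simp [hB, Nat.not_lt.mpr hx]
  have hsum3 : ∑ m ∈ Finset.range (l:ℕ), B m = ∑ m ∈ Finset.range (l:ℕ), t^(m+1) * E := by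
    rw [← Finset.sum_range_reflect (fun m => t^(m+1) * E) (l:ℕ)]
    apply Finset.sum_congr rfl
    intro m hm
    simp only [Finset.mem_range] at hm
    have : m < (l:ℕ) := hm
    simp only [hB, this, if_true]
    congr 2
    omega
  have hsum4 : ∑ m ∈ Finset.range (l:ℕ), t^(m+1) * E ≤ 3/2 * t * E := by
    rw [← Finset.sum_mul]
    apply mul_le_mul_of_nonneg_right (geomAux t ht0 ht3 (l:ℕ)) hEnn
  have hfin : 3/2 * t * E = 3 / (2 * 3^N) * E := by
    rw [hT]; field_simp
  calc |((Mvec n ξ i : ℤ):ℝ)| ≤ ∑ j : Fin N, B (j:ℕ) := habs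
    _ = ∑ m ∈ Finset.range (l:ℕ), t^(m+1) * E := by rw [hsum1, hsum2, hsum3]
    _ ≤ 3/2 * t * E := hsum4
    _ = 3 / (2 * 3^N) * E := hfin

/-- for an `N`-sparse sequence `n₁, …, n_N ∈ ℤ^d \ {0}`: (a) for every `l` and
every `ξ ∈ {-1,0,1}^N` vanishing on indices `≥ l`, each coordinate of `M(ξ) = ∑_j ξ_j n_j`
satisfies `|M(ξ)^{(i)}| ≤ (3/(2·3^N)) |n_l|₂`; (b) if moreover `3^N > (3/2)√d` and every
`n_j` has dominant first coordinate, then `M(ξ)^{(1)} ≠ 0` for every nonzero `ξ`. -/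
theorem stmt8 (d N : ℕ) (hd : 1 ≤ d) (hN : 1 ≤ N)
    (n : Fin N → Fin d → ℤ) (hnz : ∀ j, n j ≠ 0) (hsp : Sparse d N n) :
    (∀ (l : Fin N) (ξ : Fin N → SignType), (∀ k : Fin N, l ≤ k → ξ k = 0) →
        ∀ i : Fin d, |((Mvec n ξ i : ℤ) : ℝ)| ≤ 3 / (2 * 3^N) * eucNorm d (n l)) ∧
    ((3:ℝ)^N > 3/2 * Real.sqrt d →
      (∀ j : Fin N, ∀ k : Fin d, (n j k).natAbs ≤ (n j ⟨0, hd⟩).natAbs) →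
      ∀ ξ : Fin N → SignType, ξ ≠ 0 → Mvec n ξ ⟨0, hd⟩ ≠ 0) := by
  constructor
  · intro l ξ hξ i
    exact partA d N hN n hsp l ξ hξ i
  · intro h3N hdom ξ hξ0 hMz
    set i0 : Fin d := ⟨0, hd⟩ with hi0
    obtain ⟨j0, hj0⟩ : ∃ j, ξ j ≠ 0 := by
      by_contra h'; push_neg at h'; exact hξ0 (funext h')
    set s := Finset.univ.filter (fun j => ξ j ≠ 0) with hsdef
    have hs : s.Nonempty := ⟨j0, by simp [hsdef, hj0]⟩
    set l := s.max' hs with hl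
    have hlne : ξ l ≠ 0 := by have := s.max'_mem hs; simpa [hsdef] using this
    have hmax : ∀ k, l < k → ξ k = 0 := by
      intro k hk
      by_contra h'
      exact absurd (s.le_max' k (by simp [hsdef, h'])) (not_le.mpr hk)
    set ξ' : Fin N → SignType := fun k => if k < l then ξ k else 0 with hξ'
    have hξ'van : ∀ k : Fin N, l ≤ k → ξ' k = 0 := by
      intro k hk; simp [hξ', not_lt.mpr hk]
    have hbound := partA d N hN n hsp l ξ' hξ'van i0
    -- decomposition
    have hterm : ∀ j : Fin N, (ξ j : ℤ) * n j i0 =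
        (if j = l then (ξ l : ℤ) * n l i0 else 0) + (ξ' j : ℤ) * n j i0 := by
      intro j
      rcases lt_trichotomy j l with h | h | h
      · simp [hξ', h, ne_of_lt h]
      · subst h; simp [hξ']
      · have h0 : ξ j = 0 := hmax j h
        have h1 : ξ' j = 0 := by simp [hξ', not_lt.mpr (le_of_lt h)]
        simp [h0, h1, ne_of_gt h]
    have hdec : Mvec n ξ i0 = (ξ l : ℤ) * n l i0 + Mvec n ξ' i0 := by
      show (∑ j, (ξ j : ℤ) * n j i0) = (ξ l : ℤ) * n l i0 + Mvec n ξ' i0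
      calc (∑ j, (ξ j : ℤ) * n j i0)
          = ∑ j, ((if j = l then (ξ l : ℤ) * n l i0 else 0) + (ξ' j : ℤ) * n j i0) :=
            Finset.sum_congr rfl (fun j _ => hterm j)
        _ = (∑ j, if j = l then (ξ l : ℤ) * n l i0 else 0) + ∑ j, (ξ' j : ℤ) * n j i0 :=
            Finset.sum_add_distrib
        _ = (ξ l : ℤ) * n l i0 + Mvec n ξ' i0 := by
            rw [Finset.sum_ite_eq' Finset.univ l (fun _ => (ξ l : ℤ) * n l i0)]
            simp [Mvec]
    have heq : (ξ l : ℤ) * n l i0 = - Mvec n ξ' i0 := by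
      rw [hdec] at hMz; linarith [hMz]
    -- abs of sign is one
    have hsign : |((ξ l : ℤ):ℝ)| = 1 := by
      rcases hsl : (ξ l) with _|_|_
      · exact absurd hsl hlne
      · simp [hsl]
      · simp [hsl]
    have habs : |((n l i0 : ℤ):ℝ)| = |((Mvec n ξ' i0 : ℤ):ℝ)| := by
      have h0 : ((ξ l : ℤ):ℝ) * ((n l i0:ℤ):ℝ) = -((Mvec n ξ' i0:ℤ):ℝ) := by
        exact_mod_cast congrArg (fun z : ℤ => (z:ℝ)) heq
      have h1 := congrArg abs h0
      rwa [abs_mul, hsign, one_mul, abs_neg] at h1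
    set E := eucNorm d (n l) with hE
    have hEpos : 0 < E := eucNorm_pos' d (n l) (hnz l)
    have ha1 : |((n l i0 : ℤ):ℝ)| ≤ 3 / (2 * 3^N) * E := by
      rw [habs]; exact hbound
    -- E ≤ √d * a
    have hEle : E ≤ Real.sqrt d * |((n l i0 : ℤ):ℝ)| := by
      have hcoord : ∀ i : Fin d, ((n l i : ℤ):ℝ)^2 ≤ ((n l i0 : ℤ):ℝ)^2 := by
        intro i
        have h1 : (((n l i).natAbs : ℝ)) ≤ (((n l i0).natAbs : ℝ)) := by
          exact_mod_cast hdom l i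
        have e1 : (((n l i).natAbs : ℝ)) = |((n l i : ℤ):ℝ)| := by
          rw [Nat.cast_natAbs, Int.cast_abs]
        have e2 : (((n l i0).natAbs : ℝ)) = |((n l i0 : ℤ):ℝ)| := by
          rw [Nat.cast_natAbs, Int.cast_abs]
        rw [e1, e2] at h1
        calc ((n l i : ℤ):ℝ)^2 = |((n l i : ℤ):ℝ)|^2 := (sq_abs _).symm
          _ ≤ |((n l i0 : ℤ):ℝ)|^2 := by
              apply pow_le_pow_left₀ (abs_nonneg _) h1
          _ = ((n l i0 : ℤ):ℝ)^2 := sq_abs _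
      have hsum : ∑ i : Fin d, ((n l i : ℤ):ℝ)^2 ≤ (d:ℝ) * ((n l i0 : ℤ):ℝ)^2 := by
        calc ∑ i : Fin d, ((n l i : ℤ):ℝ)^2 ≤ ∑ _i : Fin d, ((n l i0 : ℤ):ℝ)^2 :=
              Finset.sum_le_sum (fun i _ => hcoord i)
          _ = (d:ℝ) * ((n l i0 : ℤ):ℝ)^2 := by
              rw [Finset.sum_const]; simp [mul_comm]
      calc E ≤ Real.sqrt ((d:ℝ) * ((n l i0 : ℤ):ℝ)^2) := Real.sqrt_le_sqrt hsum
        _ = Real.sqrt d * |((n l i0 : ℤ):ℝ)| := by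
            rw [Real.sqrt_mul (by positivity), Real.sqrt_sq_eq_abs]
    -- contradiction
    have hsd : (0:ℝ) ≤ Real.sqrt d := Real.sqrt_nonneg _
    have h3pos : (0:ℝ) < 3^N := by positivity
    have c1 : 2 * 3^N * |((n l i0 : ℤ):ℝ)| ≤ 3 * E := by
      have := mul_le_mul_of_nonneg_left ha1 (le_of_lt (by positivity : (0:ℝ) < 2 * 3^N))
      calc 2 * 3^N * |((n l i0 : ℤ):ℝ)| ≤ 2 * 3^N * (3 / (2 * 3^N) * E) := this
        _ = 3 * E := by field_simp
    have c2 : 2 * 3^N * E ≤ Real.sqrt d * (2 * 3^N * |((n l i0 : ℤ):ℝ)|) := by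
      have := mul_le_mul_of_nonneg_left hEle (le_of_lt (by positivity : (0:ℝ) < 2 * 3^N))
      calc 2 * 3^N * E ≤ 2 * 3^N * (Real.sqrt d * |((n l i0 : ℤ):ℝ)|) := this
        _ = Real.sqrt d * (2 * 3^N * |((n l i0 : ℤ):ℝ)|) := by ring
    have c3 : Real.sqrt d * (2 * 3^N * |((n l i0 : ℤ):ℝ)|) ≤ Real.sqrt d * (3 * E) :=
      mul_le_mul_of_nonneg_left c1 hsd
    have c4 : Real.sqrt d * (3 * E) < 2 * 3^N * E := by
      have : 3 * Real.sqrt d < 2 * 3^N := by linarith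
      nlinarith
    linarith

end
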